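/- arXiv:0903.2821 — 5 statements merged into one kernel-verified Lean document; each statement's English description precedes it below -/
import Mathlib

section
/- Let φ be a nondecreasing real-valued function on an interval I and f : I → ℝ nondecreasing with |f(u) - f(v)| ≤ c(φ(v) - φ(u)) for u < v in I. Then f factors as f = g ∘ φ where g : ℝ → ℝ is both Lipschitz continuous (with constant c) and nondecreasing. -/
theorem lipschitz_monotone_factorization
    (I : Set ℝ) (hI : I.OrdConnected)
    (φ f : ℝ → ℝ) (c : ℝ) (hc : 0 < c)
    (hφ : ∀ u ∈ I, ∀ v ∈ I, u ≤ v → φ u ≤ φ v)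
    (hfmono : ∀ u ∈ I, ∀ v ∈ I, u ≤ v → f u ≤ f v)
    (hf : ∀ u ∈ I, ∀ v ∈ I, u ≤ v → |f u - f v| ≤ c * (φ v - φ u)) :
    ∃ g : ℝ → ℝ, LipschitzWith (Real.toNNReal c) g ∧ Monotone g ∧
      (∀ x ∈ I, f x = g (φ x)) := by
  rcases Set.eq_empty_or_nonempty I with hIe | ⟨u₀, hu₀⟩
  · exact ⟨fun _ => 0, LipschitzWith.const' 0, monotone_const, by simp [hIe]⟩
  set g : ℝ → ℝ := fun y => sInf ((fun x => f x + c * max (y - φ x) 0) '' I) with hg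
  have hne : ∀ y : ℝ, ((fun x => f x + c * max (y - φ x) 0) '' I).Nonempty :=
    fun y => ⟨_, Set.mem_image_of_mem _ hu₀⟩
  have hbdd : ∀ y : ℝ, BddBelow ((fun x => f x + c * max (y - φ x) 0) '' I) := by
    intro y
    refine ⟨min (f u₀) (f u₀ + c * (y - φ u₀)), ?_⟩
    rintro _ ⟨x, hx, rfl⟩
    dsimp only
    rcases le_total x u₀ with h | h
    · refine le_trans (min_le_right _ _) ?_
      have h0 := hf x hx u₀ hu₀ h
      have h1 : f u₀ - f x ≤ c * (φ u₀ - φ x) := by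
        have h2 := le_abs_self (f u₀ - f x)
        rw [abs_sub_comm] at h2
        linarith
      have h3 := le_max_left (y - φ x) (0 : ℝ)
      nlinarith
    · have h1 := hfmono u₀ hu₀ x hx h
      have h2 := mul_nonneg hc.le (le_max_right (y - φ x) (0 : ℝ))
      exact le_trans (min_le_left _ _) (by linarith)
  have hmono : Monotone g := by
    intro a b hab
    refine le_csInf (hne b) ?_
    rintro _ ⟨x, hx, rfl⟩
    dsimp only
    refine le_trans (csInf_le (hbdd a) (Set.mem_image_of_mem _ hx)) ?_
    have h1 : max (a - φ x) 0 ≤ max (b - φ x) 0 := max_le_max (by linarith) le_rfl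
    nlinarith
  have key : ∀ a b : ℝ, a ≤ b → g b ≤ g a + c * (b - a) := by
    intro a b hab
    have h : ∀ z ∈ ((fun x => f x + c * max (a - φ x) 0) '' I), g b - c * (b - a) ≤ z := by
      rintro _ ⟨x, hx, rfl⟩
      dsimp only
      have h1 : g b ≤ f x + c * max (b - φ x) 0 :=
        csInf_le (hbdd b) (Set.mem_image_of_mem _ hx)
      have h2 : max (b - φ x) 0 ≤ max (a - φ x) 0 + (b - a) :=
        max_le (by linarith [le_max_left (a - φ x) (0 : ℝ)])
          (by linarith [le_max_right (a - φ x) (0 : ℝ)])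
      nlinarith
    have := le_csInf (hne a) h
    linarith
  refine ⟨g, ?_, hmono, ?_⟩
  · refine LipschitzWith.of_dist_le_mul fun a b => ?_
    rw [Real.dist_eq, Real.dist_eq, Real.coe_toNNReal c hc.le]
    rcases le_total a b with h | h
    · have h1 := hmono h
      have h2 := key a b h
      rw [abs_of_nonpos (by linarith : g a - g b ≤ 0), abs_of_nonpos (by linarith : a - b ≤ 0)]
      linarith
    · have h1 := hmono h
      have h2 := key b a h
      rw [abs_of_nonneg (by linarith : (0:ℝ) ≤ g a - g b), abs_of_nonneg (by linarith : (0:ℝ) ≤ a - b)]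
      linarith
  · intro x hx
    refine le_antisymm ?_ ?_
    · refine le_csInf (hne _) ?_
      rintro _ ⟨z, hz, rfl⟩
      dsimp only
      rcases le_total z x with h | h
      · have h0 := hf z hz x hx h
        have h1 : f x - f z ≤ c * (φ x - φ z) := by
          have h2 := le_abs_self (f x - f z)
          rw [abs_sub_comm] at h2
          linarith
        have h3 := le_max_left (φ x - φ z) (0 : ℝ)
        nlinarith
      · have h1 := hfmono x hx z hz h
        have h2 := mul_nonneg hc.le (le_max_right (φ x - φ z) (0 : ℝ))
        linarith
    · have h1 := csInf_le (hbdd (φ x)) (Set.mem_image_of_mem _ hx)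
      simpa using h1
end

section
/- Let Ψ : ℝ≥0 × ℝ≥0 → ℝ be bounded, supermodular, and vanishing on hyperplanes. Then there exist bounded nondecreasing functions φ₁, φ₂ : ℝ≥0 → ℝ≥0 with φ₁(0) = φ₂(0) = 0, and a Lipschitz continuous function Ψ̃ on ℝ≥0 × ℝ≥0, such that Ψ(u,v) = Ψ̃(φ₁(u), φ₂(v)) for all u, v ≥ 0. -/
theorem bounded_supermodular_decomposition
    (Ψ : ℝ → ℝ → ℝ)
    (hbdd : ∃ M : ℝ, ∀ u v : ℝ, 0 ≤ u → 0 ≤ v → |Ψ u v| ≤ M)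
    (hsup : ∀ a b c d : ℝ, 0 ≤ a → a ≤ b → 0 ≤ c → c ≤ d →
      Ψ a d + Ψ b c ≤ Ψ b d + Ψ a c)
    (hvan : ∀ s : ℝ, 0 ≤ s → Ψ s 0 = 0 ∧ Ψ 0 s = 0) :
    ∃ (φ₁ φ₂ : ℝ → ℝ) (Ψt : ℝ → ℝ → ℝ) (K : NNReal),
      (∀ u : ℝ, 0 ≤ u → 0 ≤ φ₁ u) ∧ (∀ u : ℝ, 0 ≤ u → 0 ≤ φ₂ u) ∧
      (∃ M₁ : ℝ, ∀ u : ℝ, 0 ≤ u → φ₁ u ≤ M₁) ∧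
      (∃ M₂ : ℝ, ∀ u : ℝ, 0 ≤ u → φ₂ u ≤ M₂) ∧
      (∀ u v : ℝ, 0 ≤ u → u ≤ v → φ₁ u ≤ φ₁ v) ∧
      (∀ u v : ℝ, 0 ≤ u → u ≤ v → φ₂ u ≤ φ₂ v) ∧
      φ₁ 0 = 0 ∧ φ₂ 0 = 0 ∧
      LipschitzOnWith K (fun p : ℝ × ℝ => Ψt p.1 p.2) (Set.Ici 0 ×ˢ Set.Ici 0) ∧
      (∀ u v : ℝ, 0 ≤ u → 0 ≤ v → Ψ u v = Ψt (φ₁ u) (φ₂ v)) := by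
  obtain ⟨M, hM⟩ := hbdd
  have hM0 : 0 ≤ M := le_trans (abs_nonneg _) (hM 0 0 le_rfl le_rfl)
  have mono2 : ∀ u, 0 ≤ u → ∀ c d, 0 ≤ c → c ≤ d → Ψ u c ≤ Ψ u d := by
    intro u hu c d hc hcd
    have h := hsup 0 u c d le_rfl hu hc hcd
    have h1 := (hvan d (hc.trans hcd)).2
    have h2 := (hvan c hc).2
    linarith
  have mono1 : ∀ v, 0 ≤ v → ∀ a b, 0 ≤ a → a ≤ b → Ψ a v ≤ Ψ b v := by
    intro v hv a b ha hab
    have h := hsup a b 0 v ha hab le_rfl hv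
    have h1 := (hvan a ha).1
    have h2 := (hvan b (ha.trans hab)).1
    linarith
  have nonneg : ∀ u v, 0 ≤ u → 0 ≤ v → 0 ≤ Ψ u v := by
    intro u v hu hv
    have h := mono2 u hu 0 v le_rfl hv
    have h0 := (hvan u hu).1
    linarith
  have hub : ∀ u v, 0 ≤ u → 0 ≤ v → Ψ u v ≤ M :=
    fun u v hu hv => (abs_le.1 (hM u v hu hv)).2
  -- φ₁ and φ₂
  set φ₁ : ℝ → ℝ := fun u => sSup {z | ∃ v, 0 ≤ v ∧ z = Ψ u v} with hφ₁
  set φ₂ : ℝ → ℝ := fun v => sSup {z | ∃ u, 0 ≤ u ∧ z = Ψ u v} with hφ₂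
  have hbdd1 : ∀ u, 0 ≤ u → BddAbove {z | ∃ v, 0 ≤ v ∧ z = Ψ u v} := by
    intro u hu
    exact ⟨M, by rintro z ⟨v, hv, rfl⟩; exact hub u v hu hv⟩
  have hbdd2 : ∀ v, 0 ≤ v → BddAbove {z | ∃ u, 0 ≤ u ∧ z = Ψ u v} := by
    intro v hv
    exact ⟨M, by rintro z ⟨u, hu, rfl⟩; exact hub u v hu hv⟩
  have hle1 : ∀ u, 0 ≤ u → ∀ v, 0 ≤ v → Ψ u v ≤ φ₁ u := by
    intro u hu v hv
    exact le_csSup (hbdd1 u hu) ⟨v, hv, rfl⟩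
  have hle2 : ∀ v, 0 ≤ v → ∀ u, 0 ≤ u → Ψ u v ≤ φ₂ v := by
    intro v hv u hu
    exact le_csSup (hbdd2 v hv) ⟨u, hu, rfl⟩
  have hφ₁nonneg : ∀ u, 0 ≤ u → 0 ≤ φ₁ u := by
    intro u hu
    have := hle1 u hu 0 le_rfl
    have h0 := (hvan u hu).1
    linarith
  have hφ₂nonneg : ∀ v, 0 ≤ v → 0 ≤ φ₂ v := by
    intro v hv
    have := hle2 v hv 0 le_rfl
    have h0 := (hvan v hv).2
    linarith
  have hφ₁M : ∀ u, 0 ≤ u → φ₁ u ≤ M := by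
    intro u hu
    exact Real.sSup_le (by rintro z ⟨v, hv, rfl⟩; exact hub u v hu hv) hM0
  have hφ₂M : ∀ v, 0 ≤ v → φ₂ v ≤ M := by
    intro v hv
    exact Real.sSup_le (by rintro z ⟨u, hu, rfl⟩; exact hub u v hu hv) hM0
  have hφ₁zero : φ₁ 0 = 0 := by
    refine le_antisymm (Real.sSup_le ?_ le_rfl) (hφ₁nonneg 0 le_rfl)
    rintro z ⟨v, hv, rfl⟩
    exact le_of_eq (hvan v hv).2
  have hφ₂zero : φ₂ 0 = 0 := by
    refine le_antisymm (Real.sSup_le ?_ le_rfl) (hφ₂nonneg 0 le_rfl)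
    rintro z ⟨u, hu, rfl⟩
    exact le_of_eq (hvan u hu).1
  have hφ₁mono : ∀ a b, 0 ≤ a → a ≤ b → φ₁ a ≤ φ₁ b := by
    intro a b ha hab
    refine Real.sSup_le ?_ (hφ₁nonneg b (ha.trans hab))
    rintro z ⟨v, hv, rfl⟩
    exact le_trans (mono1 v hv a b ha hab) (hle1 b (ha.trans hab) v hv)
  have hφ₂mono : ∀ a b, 0 ≤ a → a ≤ b → φ₂ a ≤ φ₂ b := by
    intro a b ha hab
    refine Real.sSup_le ?_ (hφ₂nonneg b (ha.trans hab))
    rintro z ⟨u, hu, rfl⟩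
    exact le_trans (mono2 u hu a b ha hab) (hle2 b (ha.trans hab) u hu)
  -- key increment estimates
  have key1 : ∀ u u' v, 0 ≤ u → u ≤ u' → 0 ≤ v → Ψ u' v + φ₁ u ≤ φ₁ u' + Ψ u v := by
    intro u u' v hu huu' hv
    have hu' : 0 ≤ u' := hu.trans huu'
    have h : φ₁ u ≤ φ₁ u' + Ψ u v - Ψ u' v := by
      refine Real.sSup_le ?_ ?_
      · rintro z ⟨w, hw, rfl⟩
        have h1 : Ψ u w ≤ Ψ u (max v w) := mono2 u hu w (max v w) hw (le_max_right _ _)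
        have h2 := hsup u u' v (max v w) hu huu' hv (le_max_left _ _)
        have h3 : Ψ u' (max v w) ≤ φ₁ u' := hle1 u' hu' (max v w) (le_trans hv (le_max_left _ _))
        linarith
      · have h1 := hle1 u' hu' v hv
        have h2 := nonneg u v hu hv
        linarith
    linarith
  have key2 : ∀ v v' u, 0 ≤ v → v ≤ v' → 0 ≤ u → Ψ u v' + φ₂ v ≤ φ₂ v' + Ψ u v := by
    intro v v' u hv hvv' hu
    have hv' : 0 ≤ v' := hv.trans hvv'
    have h : φ₂ v ≤ φ₂ v' + Ψ u v - Ψ u v' := by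
      refine Real.sSup_le ?_ ?_
      · rintro z ⟨w, hw, rfl⟩
        have h1 : Ψ w v ≤ Ψ (max u w) v := mono1 v hv w (max u w) hw (le_max_right _ _)
        have h2 := hsup u (max u w) v v' hu (le_max_left _ _) hv hvv'
        have h3 : Ψ (max u w) v' ≤ φ₂ v' := hle2 v' hv' (max u w) (le_trans hu (le_max_left _ _))
        linarith
      · have h1 := hle2 v' hv' u hu
        have h2 := nonneg u v hu hv
        linarith
    linarith
  have lip1 : ∀ u u' v, 0 ≤ u → 0 ≤ u' → 0 ≤ v → Ψ u' v - Ψ u v ≤ |φ₁ u' - φ₁ u| := by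
    intro u u' v hu hu' hv
    rcases le_total u u' with h | h
    · have hk := key1 u u' v hu h hv
      have : φ₁ u' - φ₁ u ≤ |φ₁ u' - φ₁ u| := le_abs_self _
      linarith
    · have hm := mono1 v hv u' u hu' h
      have : (0:ℝ) ≤ |φ₁ u' - φ₁ u| := abs_nonneg _
      linarith
  have lip2 : ∀ v v' u, 0 ≤ v → 0 ≤ v' → 0 ≤ u → Ψ u v' - Ψ u v ≤ |φ₂ v' - φ₂ v| := by
    intro v v' u hv hv' hu
    rcases le_total v v' with h | h
    · have hk := key2 v v' u hv h hu
      have : φ₂ v' - φ₂ v ≤ |φ₂ v' - φ₂ v| := le_abs_self _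
      linarith
    · have hm := mono2 u hu v' v hv' h
      have : (0:ℝ) ≤ |φ₂ v' - φ₂ v| := abs_nonneg _
      linarith
  have lip : ∀ u v u' v', 0 ≤ u → 0 ≤ v → 0 ≤ u' → 0 ≤ v' →
      Ψ u' v' - Ψ u v ≤ |φ₁ u' - φ₁ u| + |φ₂ v' - φ₂ v| := by
    intro u v u' v' hu hv hu' hv'
    have a := lip1 u u' v' hu hu' hv'
    have b := lip2 v v' u hv hv' hu
    linarith
  -- the extension
  set T : ℝ → ℝ → Set ℝ := fun x y =>
    {z | ∃ u, 0 ≤ u ∧ ∃ v, 0 ≤ v ∧ z = Ψ u v - |φ₁ u - x| - |φ₂ v - y|} with hT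
  set Ψt : ℝ → ℝ → ℝ := fun x y => sSup (T x y) with hΨt
  have hTne : ∀ x y, (T x y).Nonempty := fun x y => ⟨_, 0, le_rfl, 0, le_rfl, rfl⟩
  have hTbdd : ∀ x y, BddAbove (T x y) := by
    intro x y
    refine ⟨M, ?_⟩
    rintro z ⟨u, hu, v, hv, rfl⟩
    have h1 := hub u v hu hv
    have h2 : (0:ℝ) ≤ |φ₁ u - x| := abs_nonneg _
    have h3 : (0:ℝ) ≤ |φ₂ v - y| := abs_nonneg _
    linarith
  have heq : ∀ u v, 0 ≤ u → 0 ≤ v → Ψt (φ₁ u) (φ₂ v) = Ψ u v := by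
    intro u v hu hv
    refine le_antisymm ?_ ?_
    · refine Real.sSup_le ?_ (nonneg u v hu hv)
      rintro z ⟨u', hu', v', hv', rfl⟩
      have := lip u v u' v' hu hv hu' hv'
      linarith
    · refine le_csSup (hTbdd _ _) ⟨u, hu, v, hv, ?_⟩
      simp
  have hlipt : ∀ x y x' y', Ψt x y ≤ Ψt x' y' + (|x - x'| + |y - y'|) := by
    intro x y x' y'
    refine csSup_le (hTne x y) ?_
    rintro z ⟨u, hu, v, hv, rfl⟩
    have h1 : Ψ u v - |φ₁ u - x'| - |φ₂ v - y'| ≤ Ψt x' y' :=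
      le_csSup (hTbdd _ _) ⟨u, hu, v, hv, rfl⟩
    have h2 : |φ₁ u - x'| ≤ |φ₁ u - x| + |x - x'| := abs_sub_le _ _ _
    have h3 : |φ₂ v - y'| ≤ |φ₂ v - y| + |y - y'| := abs_sub_le _ _ _
    linarith
  refine ⟨φ₁, φ₂, Ψt, 2, hφ₁nonneg, hφ₂nonneg, ⟨M, hφ₁M⟩, ⟨M, hφ₂M⟩,
    fun u v hu huv => hφ₁mono u v hu huv, fun u v hu huv => hφ₂mono u v hu huv,
    hφ₁zero, hφ₂zero, ?_, fun u v hu hv => (heq u v hu hv).symm⟩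
  rw [lipschitzOnWith_iff_dist_le_mul]
  intro p _ q _
  have h1 := hlipt p.1 p.2 q.1 q.2
  have h2 := hlipt q.1 q.2 p.1 p.2
  rw [Real.dist_eq, Prod.dist_eq, Real.dist_eq, Real.dist_eq]
  have ha : |p.1 - q.1| ≤ max |p.1 - q.1| |p.2 - q.2| := le_max_left _ _
  have hb : |p.2 - q.2| ≤ max |p.1 - q.1| |p.2 - q.2| := le_max_right _ _
  have habs : |Ψt p.1 p.2 - Ψt q.1 q.2| ≤ |p.1 - q.1| + |p.2 - q.2| := by
    have e1 : |q.1 - p.1| = |p.1 - q.1| := abs_sub_comm _ _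
    have e2 : |q.2 - p.2| = |p.2 - q.2| := abs_sub_comm _ _
    rw [abs_sub_le_iff]
    constructor <;> linarith
  calc |Ψt p.1 p.2 - Ψt q.1 q.2| ≤ |p.1 - q.1| + |p.2 - q.2| := habs
    _ ≤ 2 * max |p.1 - q.1| |p.2 - q.2| := by
        rw [two_mul]; exact add_le_add ha hb
    _ = (2:NNReal) * max |p.1 - q.1| |p.2 - q.2| := by norm_num
end

section
/- Let j : [0,∞) → ℝ be nonnegative and nonincreasing, and let h : ℝⁿ → [0,∞) be a Schwarz symmetric (radial, radially nonincreasing) integrable function. Then the convolution ν(x) = ∫_{ℝⁿ} j(|x−y|) h(y) dy is radial and radially nonincreasing, i.e. ν = ν* up to a.e. equality. -/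
open MeasureTheory RealInnerProductSpace

set_option maxHeartbeats 1000000 in
theorem convolution_with_schwarz_symmetric_is_schwarz_symmetric
    (n : ℕ) (hn : 1 ≤ n)
    (j : ℝ → ℝ) (hj0 : ∀ s : ℝ, 0 ≤ s → 0 ≤ j s)
    (hj : ∀ s t : ℝ, 0 ≤ s → s ≤ t → j t ≤ j s)
    (h : EuclideanSpace ℝ (Fin n) → ℝ)
    (hh0 : ∀ x, 0 ≤ h x)
    (hhrad : ∀ x y : EuclideanSpace ℝ (Fin n), ‖x‖ ≤ ‖y‖ → h y ≤ h x)
    (hhint : Integrable h volume)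
    (hint : ∀ x : EuclideanSpace ℝ (Fin n),
      Integrable (fun y => j ‖x - y‖ * h y) volume) :
    ∀ x y : EuclideanSpace ℝ (Fin n), ‖x‖ ≤ ‖y‖ →
      (∫ z, j ‖y - z‖ * h z) ≤ ∫ z, j ‖x - z‖ * h z := by
  intro x y hxy
  rcases eq_or_ne x y with rfl | hne
  · exact le_refl _
  set d : ℝ := ‖y - x‖ with hd_def
  have hd : (0:ℝ) < d := norm_pos_iff.mpr (sub_ne_zero.mpr (Ne.symm hne))
  set u : EuclideanSpace ℝ (Fin n) := d⁻¹ • (y - x) with hu_def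
  have hu : ‖u‖ = 1 := by
    rw [hu_def, norm_smul, norm_inv, Real.norm_eq_abs, abs_of_pos hd, ← hd_def,
      inv_mul_cancel₀ hd.ne']
  have hinner : ∀ z : EuclideanSpace ℝ (Fin n), ⟪u, z⟫ = d⁻¹ * ⟪y - x, z⟫ := by
    intro z; rw [hu_def, real_inner_smul_left]
  have hyxu : y - x = d • u := by
    rw [hu_def, smul_smul, mul_inv_cancel₀ hd.ne', one_smul]
  set c : ℝ := (‖y‖^2 - ‖x‖^2) / (2*d) with hc_def
  have hc0 : 0 ≤ c := by
    apply div_nonneg _ (by positivity)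
    have : ‖x‖^2 ≤ ‖y‖^2 := pow_le_pow_left₀ (norm_nonneg x) hxy 2
    linarith
  have hdsq : d^2 = ‖y‖^2 - 2*⟪y,x⟫ + ‖x‖^2 := by
    rw [hd_def]; exact norm_sub_sq_real y x
  have hcd : 2*d*c = ‖y‖^2 - ‖x‖^2 := by
    rw [hc_def]; field_simp
  clear_value d u c
  -- the reflection
  set R : EuclideanSpace ℝ (Fin n) ≃ₗᵢ[ℝ] EuclideanSpace ℝ (Fin n) :=
    ((ℝ ∙ u).reflection).trans (LinearIsometryEquiv.neg ℝ) with hR_def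
  have hR : ∀ z, R z = z - (2 * ⟪u, z⟫) • u := by
    intro z
    simp [hR_def, Submodule.reflection_apply, Submodule.starProjection_singleton, hu, two_smul]
    module
  set v : EuclideanSpace ℝ (Fin n) := (2*c) • u with hv_def
  set σ : EuclideanSpace ℝ (Fin n) → EuclideanSpace ℝ (Fin n) := fun z => R z + v with hσ_def
  have hσ_apply : ∀ z, σ z = z + (2*(c - ⟪u, z⟫)) • u := by
    intro z
    show R z + v = _
    rw [hR z, hv_def]
    module
  have hσmp : MeasurePreserving σ (volume : Measure (EuclideanSpace ℝ (Fin n))) volume := by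
    rw [hσ_def]
    exact (measurePreserving_add_right volume v).comp R.measurePreserving
  have hσcont : Continuous σ := by
    rw [hσ_def]; exact R.continuous.add continuous_const
  have hiso : ∀ a b, ‖σ a - σ b‖ = ‖a - b‖ := by
    intro a b
    simp only [hσ_def]
    rw [add_sub_add_right_eq_sub, ← map_sub]
    exact R.norm_map _
  clear_value R v σ
  clear hR hv_def hσ_def
  -- σ x = y
  have hux : 2*(c - ⟪u, x⟫) = d := by
    have h1 : ⟪u, x⟫ = d⁻¹ * (⟪y,x⟫ - ‖x‖^2) := by
      rw [hinner, inner_sub_left, real_inner_self_eq_norm_sq]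
    obtain ⟨p, hp⟩ : ∃ p : ℝ, ⟪y,x⟫ = p := ⟨_, rfl⟩
    rw [h1, hp]
    rw [hp] at hdsq
    have hkey : d * (2*(c - d⁻¹ * (p - ‖x‖^2))) = d * d := by
      have h4 : d * (d⁻¹*(p - ‖x‖^2)) = p - ‖x‖^2 := by
        rw [← mul_assoc, mul_inv_cancel₀ hd.ne', one_mul]
      have h5 : d * (2*(c - d⁻¹*(p - ‖x‖^2))) = 2*(d*c) - 2*(d*(d⁻¹*(p - ‖x‖^2))) := by
        ring
      rw [h5, h4]
      nlinarith [hcd, hdsq]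
    exact mul_left_cancel₀ hd.ne' hkey
  have hσx : σ x = y := by
    rw [hσ_apply, hux, ← hyxu]
    abel
  -- σ is an involution
  have hinneru : ∀ z, ⟪u, σ z⟫ = 2*c - ⟪u, z⟫ := by
    intro z
    rw [hσ_apply, inner_add_right, real_inner_smul_right, real_inner_self_eq_norm_sq, hu]
    ring
  have hσσ : ∀ z, σ (σ z) = z := by
    intro z
    rw [hσ_apply (σ z), hinneru, hσ_apply z]
    match_scalars <;> ring
  have hσy : σ y = x := by rw [← hσx, hσσ]
  -- σ is an isometry on differences
  have hxσ : ∀ z, ‖x - σ z‖ = ‖y - z‖ := by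
    intro z; rw [← hσy, hiso]
  have hyσ : ∀ z, ‖y - σ z‖ = ‖x - z‖ := by
    intro z; rw [← hσx, hiso]
  -- norm comparisons
  have hnσ : ∀ z, ‖σ z‖^2 = ‖z‖^2 + 4*c*(c - ⟪u, z⟫) := by
    intro z
    rw [hσ_apply, norm_add_sq_real, real_inner_smul_right, norm_smul, mul_pow,
      hu, Real.norm_eq_abs, sq_abs, real_inner_comm z u]
    obtain ⟨s, hs⟩ : ∃ s : ℝ, ⟪z,u⟫ = s := ⟨_, rfl⟩
    rw [hs]; ring
  have hnyz : ∀ z, ‖y - z‖^2 - ‖x - z‖^2 = 2*d*(c - ⟪u, z⟫) := by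
    intro z
    have h1 : ‖y - z‖^2 = ‖y‖^2 - 2*⟪y,z⟫ + ‖z‖^2 := norm_sub_sq_real y z
    have h2 : ‖x - z‖^2 = ‖x‖^2 - 2*⟪x,z⟫ + ‖z‖^2 := norm_sub_sq_real x z
    have h3 : ⟪u, z⟫ = d⁻¹ * (⟪y,z⟫ - ⟪x,z⟫) := by
      rw [hinner, inner_sub_left]
    obtain ⟨p, hp⟩ : ∃ p : ℝ, ⟪y,z⟫ = p := ⟨_, rfl⟩
    obtain ⟨q, hq⟩ : ∃ q : ℝ, ⟪x,z⟫ = q := ⟨_, rfl⟩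
    rw [h1, h2, h3, hp, hq, mul_sub]
    have h4 : 2*d*(d⁻¹*(p - q)) = 2*(p - q) := by
      field_simp
    linarith [hcd, h4]
  -- pointwise nonnegativity of the symmetrized integrand
  have sq_mono : ∀ a b : ℝ, 0 ≤ a → 0 ≤ b → a^2 ≤ b^2 → a ≤ b := by
    intro a b ha hb hab; nlinarith
  have hFnn : ∀ z, 0 ≤ (j ‖x - z‖ - j ‖y - z‖) * (h z - h (σ z)) := by
    intro z
    rcases le_or_gt (⟪u, z⟫) c with hs | hs
    · have e1 : (0:ℝ) ≤ 2*d*(c - ⟪u, z⟫) :=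
        mul_nonneg (by linarith) (by linarith)
      have e2 : (0:ℝ) ≤ 4*c*(c - ⟪u, z⟫) :=
        mul_nonneg (by linarith) (by linarith)
      apply mul_nonneg
      · have hle : ‖x - z‖ ≤ ‖y - z‖ := by
          apply sq_mono _ _ (norm_nonneg _) (norm_nonneg _)
          linarith [hnyz z]
        linarith [hj _ _ (norm_nonneg (x - z)) hle]
      · have hle : ‖z‖ ≤ ‖σ z‖ := by
          apply sq_mono _ _ (norm_nonneg _) (norm_nonneg _)
          linarith [hnσ z]
        linarith [hhrad z (σ z) hle]
    · have e1 : (0:ℝ) ≤ 2*d*(⟪u, z⟫ - c) :=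
        mul_nonneg (by linarith) (by linarith)
      have e2 : (0:ℝ) ≤ 4*c*(⟪u, z⟫ - c) :=
        mul_nonneg (by linarith) (by linarith)
      have e1' : 2*d*(c - ⟪u, z⟫) ≤ 0 := by nlinarith
      have e2' : 4*c*(c - ⟪u, z⟫) ≤ 0 := by nlinarith
      have hA : j ‖x - z‖ - j ‖y - z‖ ≤ 0 := by
        have hle : ‖y - z‖ ≤ ‖x - z‖ := by
          apply sq_mono _ _ (norm_nonneg _) (norm_nonneg _)
          linarith [hnyz z]
        linarith [hj _ _ (norm_nonneg (y - z)) hle]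
      have hB : h z - h (σ z) ≤ 0 := by
        have hle : ‖σ z‖ ≤ ‖z‖ := by
          apply sq_mono _ _ (norm_nonneg _) (norm_nonneg _)
          linarith [hnσ z]
        linarith [hhrad (σ z) z hle]
      nlinarith [mul_nonneg (neg_nonneg.mpr hA) (neg_nonneg.mpr hB)]
  have hσemb : MeasurableEmbedding σ :=
    MeasurableEquiv.measurableEmbedding
      { toEquiv := ⟨σ, σ, hσσ, hσσ⟩
        measurable_toFun := hσcont.measurable
        measurable_invFun := hσcont.measurable }
  set a : EuclideanSpace ℝ (Fin n) → ℝ := fun z => j ‖x - z‖ * h z with ha_def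
  set b : EuclideanSpace ℝ (Fin n) → ℝ := fun z => j ‖y - z‖ * h z with hb_def
  have hInta : Integrable a volume := hint x
  have hIntb : Integrable b volume := hint y
  have hIntaσ : Integrable (a ∘ σ) volume :=
    (hσmp.integrable_comp_emb hσemb).mpr hInta
  have hIntbσ : Integrable (b ∘ σ) volume :=
    (hσmp.integrable_comp_emb hσemb).mpr hIntb
  have hIaσ : ∫ z, (a ∘ σ) z = ∫ z, a z := hσmp.integral_comp hσemb a
  have hIbσ : ∫ z, (b ∘ σ) z = ∫ z, b z := hσmp.integral_comp hσemb b
  have key : (∫ z, b z) + (∫ z, (b ∘ σ) z) ≤ (∫ z, a z) + (∫ z, (a ∘ σ) z) := by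
    rw [← integral_add hIntb hIntbσ, ← integral_add hInta hIntaσ]
    apply integral_mono (hIntb.add hIntbσ) (hInta.add hIntaσ)
    intro z
    simp only [Pi.add_apply, ha_def, hb_def, Function.comp_apply, hxσ z, hyσ z]
    nlinarith [hFnn z]
  rw [hIaσ, hIbσ] at key
  show (∫ z, b z) ≤ ∫ z, a z
  linarith
end

section
/- Let σ be a reflection of ℝⁿ across a hyperplane H₀, with half-spaces H₊ (containing a distinguished point) and H₋, satisfying |x − x'| ≤ |x − σ(x')| for all x, x' ∈ H₊. Let j : [0,∞) → ℝ be nonincreasing and h : ℝⁿ → [0,∞) integrable with h(y) ≥ h(σ(y)) for all y ∈ H₊. Then the function ν(x) = ∫_{ℝⁿ} j(|x−y|) h(y) dy satisfies ν(x) ≥ ν(σ(x)) for all x ∈ H₊. -/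
open MeasureTheory

theorem polarization_inequality_for_convolution
    (n : ℕ) (hn : 1 ≤ n)
    (σ : EuclideanSpace ℝ (Fin n) → EuclideanSpace ℝ (Fin n))
    (hσiso : Isometry σ)
    (hσinv : ∀ x, σ (σ x) = x)
    (Hp : Set (EuclideanSpace ℝ (Fin n)))
    (hHpm : MeasurableSet Hp)
    (hcover : ∀ y, y ∈ Hp ∨ σ y ∈ Hp)
    (hgeom : ∀ x ∈ Hp, ∀ y ∈ Hp, ‖x - y‖ ≤ ‖σ x - y‖)
    (j : ℝ → ℝ) (hj : ∀ s t : ℝ, 0 ≤ s → s ≤ t → j t ≤ j s)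
    (h : EuclideanSpace ℝ (Fin n) → ℝ)
    (hh0 : ∀ x, 0 ≤ h x)
    (hhint : Integrable h volume)
    (hhpol : ∀ y ∈ Hp, h (σ y) ≤ h y)
    (hint : ∀ x : EuclideanSpace ℝ (Fin n),
      Integrable (fun y => j ‖x - y‖ * h y) volume) :
    ∀ x ∈ Hp, (∫ y, j ‖σ x - y‖ * h y) ≤ ∫ y, j ‖x - y‖ * h y := by
  -- σ as an isometry equivalence
  let e : EuclideanSpace ℝ (Fin n) ≃ᵢ EuclideanSpace ℝ (Fin n) :=
    ⟨⟨σ, σ, fun x => hσinv x, fun x => hσinv x⟩, hσiso⟩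
  -- σ is measure preserving
  have hmp : MeasurePreserving σ
      (volume : Measure (EuclideanSpace ℝ (Fin n))) volume := by
    have hL := e.toRealLinearIsometryEquiv.measurePreserving
    have hcoe : σ = fun y => e.toRealLinearIsometryEquiv y + σ 0 := by
      funext y
      simp [IsometryEquiv.toRealLinearIsometryEquiv_apply, e]
    rw [hcoe]
    exact (measurePreserving_add_right volume (σ 0)).comp hL
  have hemb : MeasurableEmbedding σ :=
    e.toHomeomorph.toMeasurableEquiv.measurableEmbedding
  -- basic norm identities
  have hnorm1 : ∀ a b : EuclideanSpace ℝ (Fin n), ‖σ a - σ b‖ = ‖a - b‖ := by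
    intro a b
    rw [← dist_eq_norm, ← dist_eq_norm]
    exact hσiso.dist_eq a b
  have hnorm2 : ∀ a b : EuclideanSpace ℝ (Fin n), ‖a - σ b‖ = ‖σ a - b‖ := by
    intro a b
    calc ‖a - σ b‖ = ‖σ a - σ (σ b)‖ := (hnorm1 a (σ b)).symm
      _ = ‖σ a - b‖ := by rw [hσinv]
  intro x hx
  set g : EuclideanSpace ℝ (Fin n) → ℝ :=
    fun y => j ‖x - y‖ - j ‖σ x - y‖ with hg
  -- g (σ y) = - g y
  have hgσ : ∀ y, g (σ y) = - g y := by
    intro y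
    simp only [hg]
    rw [hnorm2 x y, show ‖σ x - σ y‖ = ‖x - y‖ from hnorm1 x y]
    ring
  -- g is nonneg on Hp
  have hg0 : ∀ y ∈ Hp, 0 ≤ g y := by
    intro y hy
    have := hj ‖x - y‖ ‖σ x - y‖ (norm_nonneg _) (hgeom x hx y hy)
    simpa [hg] using this
  -- integrability facts
  have hint1 : Integrable (fun y => g y * h y) volume := by
    have heq : (fun y => g y * h y)
        = fun y => j ‖x - y‖ * h y - j ‖σ x - y‖ * h y := by
      funext y; simp only [hg]; ring
    rw [heq]
    exact (hint x).sub (hint (σ x))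
  have hint2 : Integrable (fun y => g y * h (σ y)) volume := by
    have key : (fun y : EuclideanSpace ℝ (Fin n) => g y * h (σ y)) =
        (fun z : EuclideanSpace ℝ (Fin n) =>
          j ‖σ x - z‖ * h z - j ‖x - z‖ * h z) ∘ σ := by
      funext y
      simp only [Function.comp_apply, hg]
      rw [hnorm2 x y, show ‖σ x - σ y‖ = ‖x - y‖ from hnorm1 x y]
      ring
    rw [key]
    exact (hmp.integrable_comp_emb hemb).2 ((hint (σ x)).sub (hint x))
  -- reduce goal to 0 ≤ ∫ g * h
  rw [← sub_nonneg, ← integral_sub (hint x) (hint (σ x))]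
  have hGoal : (fun y => j ‖x - y‖ * h y - j ‖σ x - y‖ * h y)
      = fun y => g y * h y := by
    funext y; simp only [hg]; ring
  rw [hGoal]
  -- split the integral
  have hsplit : (∫ y, g y * h y) =
      (∫ y in Hp, g y * h y) + ∫ y in Hpᶜ, g y * h y :=
    (integral_add_compl hHpm hint1).symm
  -- transform the integral over Hpᶜ
  have hpreim : σ ⁻¹' Hpᶜ ⊆ Hp := by
    intro z hz
    rcases hcover z with hz' | hz'
    · exact hz'
    · exact absurd hz' hz
  have hσpre : Hpᶜ = σ ⁻¹' (σ ⁻¹' Hpᶜ) := by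
    ext y
    simp [Set.mem_preimage, hσinv]
  have htrans : (∫ y in Hpᶜ, g y * h y) =
      - ∫ z in σ ⁻¹' Hpᶜ, g z * h (σ z) := by
    have hpr := hmp.setIntegral_preimage_emb hemb
      (fun z => g z * h (σ z)) (σ ⁻¹' Hpᶜ)
    rw [← hpr, ← hσpre, ← integral_neg]
    congr 1
    funext y
    rw [hgσ, hσinv]
    ring
  rw [hsplit, htrans, ← sub_eq_add_neg, sub_nonneg]
  -- the comparison
  have hmeas_pre : MeasurableSet (σ ⁻¹' Hpᶜ) := hemb.measurable hHpm.compl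
  calc (∫ z in σ ⁻¹' Hpᶜ, g z * h (σ z))
      ≤ ∫ z in σ ⁻¹' Hpᶜ, g z * h z := by
        apply setIntegral_mono_on hint2.integrableOn hint1.integrableOn hmeas_pre
        intro z hz
        exact mul_le_mul_of_nonneg_left (hhpol z (hpreim hz)) (hg0 z (hpreim hz))
    _ ≤ ∫ y in Hp, g y * h y := by
        apply setIntegral_mono_set hint1.integrableOn
        · filter_upwards [ae_restrict_mem hHpm] with y hy
          exact mul_nonneg (hg0 y hy) (hh0 y)
        · exact HasSubset.Subset.eventuallyLE hpreim
end

section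
/- Let u : ℝⁿ → [0,∞) be radial and radially nonincreasing, k, ℓ > 0, B the centered ball with μ(B) = ℓ/k, and r its radius. Then for any measurable ν : ℝⁿ → [0,k] with ∫ν ≤ ℓ, one has ∫_B u(x)(ν(x)/k − 1) dx + ∫_{ℝⁿ∖B} u(x)ν(x)/k dx ≤ u(r)·(∫ν/k − μ(B)) ≤ 0, where u(r) denotes the value of u on the boundary of B (the bathtub principle inequality). -/
open MeasureTheory

theorem bathtub_principle_inequality
    (n : ℕ) (hn : 1 ≤ n)
    (k ℓ : ℝ) (hk : 0 < k) (hℓ : 0 < ℓ)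
    (u : EuclideanSpace ℝ (Fin n) → ℝ)
    (hu0 : ∀ x, 0 ≤ u x)
    (hurad : ∀ x y : EuclideanSpace ℝ (Fin n), ‖x‖ ≤ ‖y‖ → u y ≤ u x)
    (r : ℝ) (hr : 0 < r)
    (hB : volume (Metric.ball (0 : EuclideanSpace ℝ (Fin n)) r) = ENNReal.ofReal (ℓ / k))
    (x₀ : EuclideanSpace ℝ (Fin n)) (hx₀ : ‖x₀‖ = r)
    (ν : EuclideanSpace ℝ (Fin n) → ℝ)
    (hνm : Measurable ν)
    (hν : ∀ x, 0 ≤ ν x ∧ ν x ≤ k)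
    (hνint : Integrable ν volume)
    (hνℓ : ∫ x, ν x ≤ ℓ)
    (hint1 : IntegrableOn (fun x => u x * (ν x / k - 1))
      (Metric.ball (0 : EuclideanSpace ℝ (Fin n)) r) volume)
    (hint2 : IntegrableOn (fun x => u x * ν x / k)
      (Metric.ball (0 : EuclideanSpace ℝ (Fin n)) r)ᶜ volume) :
    (∫ x in Metric.ball (0 : EuclideanSpace ℝ (Fin n)) r, u x * (ν x / k - 1)) +
      (∫ x in (Metric.ball (0 : EuclideanSpace ℝ (Fin n)) r)ᶜ, u x * ν x / k) ≤
        u x₀ * ((∫ x, ν x) / k - ℓ / k) ∧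
    u x₀ * ((∫ x, ν x) / k - ℓ / k) ≤ 0 := by
  set B := Metric.ball (0 : EuclideanSpace ℝ (Fin n)) r with hBdef
  have hBmeas : MeasurableSet B := measurableSet_ball
  have hBfin : volume B ≠ ⊤ := by rw [hB]; exact ENNReal.ofReal_ne_top
  have hBvol : (volume B).toReal = ℓ / k := by
    rw [hB, ENNReal.toReal_ofReal (by positivity)]
  set c := u x₀ with hc
  have hc0 : 0 ≤ c := hu0 x₀
  have hνB : IntegrableOn ν B volume := hνint.integrableOn
  have hνBc : IntegrableOn ν Bᶜ volume := hνint.integrableOn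
  have hconst : IntegrableOn (fun _ : EuclideanSpace ℝ (Fin n) => (1 : ℝ)) B volume :=
    integrableOn_const hBfin
  have hint1' : IntegrableOn (fun x => c * (ν x / k - 1)) B volume :=
    ((hνB.div_const k).sub hconst).const_mul c
  have hint2' : IntegrableOn (fun x => c * ν x / k) Bᶜ volume := by
    simpa [mul_div_assoc, IntegrableOn] using ((hνBc.div_const k).const_mul c)
  have h1 : (∫ x in B, u x * (ν x / k - 1)) ≤ ∫ x in B, c * (ν x / k - 1) := by
    apply setIntegral_mono_on hint1 hint1' hBmeas
    intro x hx
    have hxr : ‖x‖ ≤ ‖x₀‖ := by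
      rw [hx₀]
      exact le_of_lt (by simpa [hBdef, Metric.mem_ball, dist_zero_right] using hx)
    have huc : c ≤ u x := hurad x x₀ hxr
    have hneg : ν x / k - 1 ≤ 0 := by
      have h := (hν x).2
      have : ν x / k ≤ 1 := (div_le_one hk).2 h
      linarith
    exact mul_le_mul_of_nonpos_right huc hneg
  have h2 : (∫ x in Bᶜ, u x * ν x / k) ≤ ∫ x in Bᶜ, c * ν x / k := by
    apply setIntegral_mono_on hint2 hint2' hBmeas.compl
    intro x hx
    have hxr : ‖x₀‖ ≤ ‖x‖ := by
      rw [hx₀]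
      have h : ¬ dist x 0 < r := hx
      simpa [dist_zero_right] using not_lt.1 h
    have huc : u x ≤ c := hurad x₀ x hxr
    have hν0 : 0 ≤ ν x := (hν x).1
    gcongr
  have e1 : ∫ x in B, c * (ν x / k - 1) = c * ((∫ x in B, ν x) / k - ℓ / k) := by
    rw [integral_const_mul]
    congr 1
    rw [integral_sub (hνB.div_const k) hconst, integral_div, setIntegral_const,
      smul_eq_mul, mul_one, measureReal_def, hBvol]
  have e2 : ∫ x in Bᶜ, c * ν x / k = c * ((∫ x in Bᶜ, ν x) / k) := by
    simp_rw [mul_div_assoc]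
    rw [integral_const_mul, integral_div]
  have esum : (∫ x in B, ν x) + (∫ x in Bᶜ, ν x) = ∫ x, ν x :=
    integral_add_compl hBmeas hνint
  have key : (∫ x in B, c * (ν x / k - 1)) + (∫ x in Bᶜ, c * ν x / k)
      = c * ((∫ x, ν x) / k - ℓ / k) := by
    rw [e1, e2, ← esum]; ring
  constructor
  · calc (∫ x in B, u x * (ν x / k - 1)) + (∫ x in Bᶜ, u x * ν x / k)
        ≤ (∫ x in B, c * (ν x / k - 1)) + (∫ x in Bᶜ, c * ν x / k) := add_le_add h1 h2
      _ = c * ((∫ x, ν x) / k - ℓ / k) := key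
  · apply mul_nonpos_of_nonneg_of_nonpos hc0
    have : (∫ x, ν x) / k ≤ ℓ / k := by gcongr
    linarith
end
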